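/- arXiv:2108.03282 — 2 statements merged into one kernel-verified Lean document; each statement's English description precedes it below -/
import Mathlib

section
/- Let B be a family of blocks in a monoid M with parameter type Θ, and let 1 ≤ m ≤ n. Then for every parameter assignment θ for the triangle T_n and every α ∈ Θ, there exists a parameter assignment θ' such that T_n(θ) * B m α = T_n(θ'); that is, a single block can be fully merged into a triangle of blocks. -/
/-- The cascade `C_{i,j}(θ) = B i (θ i) * B (i+1) (θ (i+1)) * ⋯ * B j (θ j)`. -/
def cascade {M Θ : Type*} [Monoid M] (B : ℕ → Θ → M) (i j : ℕ) (θ : ℕ → Θ) : M :=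
  ((List.range (j + 1 - i)).map (fun k => B (i + k) (θ (i + k)))).prod

/-- The triangle `T_n(θ) = C_{n,n} * C_{n-1,n} * ⋯ * C_{1,n}`, where the `k`-th cascade
`C_{n-k,n}` carries its own parameters `θ k`. -/
def triangle {M Θ : Type*} [Monoid M] (B : ℕ → Θ → M) (n : ℕ) (θ : ℕ → ℕ → Θ) : M :=
  ((List.range n).map (fun k => cascade B (n - k) n (θ k))).prod

section helpers
variable {M Θ : Type*} [Monoid M] (B : ℕ → Θ → M)

lemma cascade_empty (i j : ℕ) (h : j < i) (θ : ℕ → Θ) : cascade B i j θ = 1 := by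
  have : j + 1 - i = 0 := by omega
  simp [cascade, this]

lemma cascade_cons (i j : ℕ) (h : i ≤ j) (θ : ℕ → Θ) :
    cascade B i j θ = B i (θ i) * cascade B (i + 1) j θ := by
  unfold cascade
  have h1 : j + 1 - i = (j + 1 - (i + 1)) + 1 := by omega
  rw [h1, List.range_succ_eq_map, List.map_cons, List.prod_cons, List.map_map]
  simp only [Nat.add_zero]
  congr 1
  refine congrArg List.prod ?_
  apply List.map_congr_left
  intro k hk
  simp only [Function.comp_apply]
  have h2 : i + Nat.succ k = i + 1 + k := by omega
  rw [h2]

lemma cascade_congr (i j : ℕ) (θ θ₂ : ℕ → Θ) (h : ∀ k, i ≤ k → k ≤ j → θ k = θ₂ k) :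
    cascade B i j θ = cascade B i j θ₂ := by
  unfold cascade
  refine congrArg List.prod ?_
  apply List.map_congr_left
  intro k hk
  rw [List.mem_range] at hk
  rw [h (i + k) (by omega) (by omega)]

lemma cascade_split : ∀ (d i m j : ℕ), m + 1 - i = d → i ≤ m + 1 → m ≤ j → ∀ θ : ℕ → Θ,
    cascade B i j θ = cascade B i m θ * cascade B (m + 1) j θ := by
  intro d
  induction d with
  | zero =>
    intro i m j hd h1 h2 θ
    have : i = m + 1 := by omega
    subst this
    rw [cascade_empty B (m+1) m (by omega), one_mul]
  | succ d ih =>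
    intro i m j hd h1 h2 θ
    have him : i ≤ m := by omega
    rw [cascade_cons B i j (by omega), cascade_cons B i m him,
      ih (i+1) m j (by omega) (by omega) h2, mul_assoc]

lemma cascade_commute (i j m : ℕ) (θ : ℕ → Θ) (α : Θ)
    (hc : ∀ k, i ≤ k → k ≤ j → B m α * B k (θ k) = B k (θ k) * B m α) :
    Commute (B m α) (cascade B i j θ) := by
  apply Commute.list_prod_right
  intro y hy
  rw [List.mem_map] at hy
  obtain ⟨k, hk, rfl⟩ := hy
  rw [List.mem_range] at hk
  exact hc (i + k) (by omega) (by omega)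



lemma rearr {N : Type*} [Monoid N] (p x y z w a b c : N)
    (h1 : z * w = w * z) (h2 : x * y * w = a * b * c) (h3 : p * a = a * p) :
    p * (x * (y * z)) * w = a * (p * (b * (c * z))) := by
  have A : x * (y * z) * w = x * y * w * z := by
    calc x * (y * z) * w = x * (y * (z * w)) := by rw [mul_assoc, mul_assoc]
      _ = x * (y * (w * z)) := by rw [h1]
      _ = x * y * w * z := by simp only [← mul_assoc]
  calc p * (x * (y * z)) * w = p * (x * (y * z) * w) := mul_assoc _ _ _
    _ = p * (x * y * w * z) := by rw [A]
    _ = p * (a * b * c * z) := by rw [h2]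
    _ = p * a * (b * (c * z)) := by simp only [← mul_assoc]
    _ = a * p * (b * (c * z)) := by rw [h3]
    _ = a * (p * (b * (c * z))) := mul_assoc _ _ _

lemma cascade_merge
    (hfusion : ∀ (i : ℕ) (α β : Θ), ∃ a : Θ, B i α * B i β = B i a)
    (i j : ℕ) (hij : i ≤ j) (hj : 1 ≤ j) (θ : ℕ → Θ) (α : Θ) :
    ∃ θ' : ℕ → Θ, cascade B i j θ * B j α = cascade B i j θ' := by
  obtain ⟨jj, rfl⟩ : ∃ jj, j = jj + 1 := ⟨j - 1, by omega⟩
  obtain ⟨a, ha⟩ := hfusion (jj + 1) (θ (jj + 1)) α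
  refine ⟨Function.update θ (jj + 1) a, ?_⟩
  have hs := cascade_split B (jj + 1 - i) i jj (jj + 1) rfl (by omega) (by omega)
  rw [hs θ, hs (Function.update θ (jj + 1) a)]
  rw [cascade_cons B (jj + 1) (jj + 1) le_rfl, cascade_empty B (jj + 2) (jj + 1) (by omega),
    cascade_cons B (jj + 1) (jj + 1) le_rfl, cascade_empty B (jj + 2) (jj + 1) (by omega)]
  rw [cascade_congr B i jj θ (Function.update θ (jj + 1) a)
    (fun k _ hk => by rw [Function.update_of_ne (by omega)])]
  simp only [Function.update_self, mul_one, mul_assoc, ha]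

lemma cascade_push
    (hcomm : ∀ (i j : ℕ), 1 < Nat.dist i j → ∀ (α β : Θ),
      B i α * B j β = B j β * B i α)
    (hturnover : ∀ (i : ℕ) (α β γ : Θ), ∃ a b c : Θ,
      B i α * B (i + 1) β * B i γ = B (i + 1) a * B i b * B (i + 1) c)
    (i m j : ℕ) (hi : 1 ≤ i) (him : i ≤ m) (hmj : m < j) (θ : ℕ → Θ) (α : Θ) :
    ∃ (β : Θ) (θ' : ℕ → Θ), cascade B i j θ * B m α = B (m + 1) β * cascade B i j θ' := by
  obtain ⟨a, b, c, htu⟩ := hturnover m (θ m) (θ (m + 1)) α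
  set θ' : ℕ → Θ := Function.update (Function.update θ m b) (m + 1) c with hθ'
  have hθ'm : θ' m = b := by
    rw [hθ', Function.update_of_ne (by omega), Function.update_self]
  have hθ'm1 : θ' (m + 1) = c := by rw [hθ', Function.update_self]
  refine ⟨a, θ', ?_⟩
  -- decompose the cascade
  have hdec : ∀ ψ : ℕ → Θ, cascade B i j ψ =
      cascade B i (m - 1) ψ * (B m (ψ m) * (B (m + 1) (ψ (m + 1)) * cascade B (m + 2) j ψ)) := by
    intro ψ
    have hs := cascade_split B (m - i) i (m - 1) j (by omega) (by omega) (by omega) ψ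
    have h1 : m - 1 + 1 = m := by omega
    rw [h1] at hs
    rw [hs, cascade_cons B m j (by omega), cascade_cons B (m + 1) j (by omega)]
  rw [hdec θ, hdec θ', hθ'm, hθ'm1]
  rw [cascade_congr B i (m - 1) θ' θ
    (fun k _ hk => by rw [hθ', Function.update_of_ne (by omega), Function.update_of_ne (by omega)]),
    cascade_congr B (m + 2) j θ' θ
    (fun k hk _ => by rw [hθ', Function.update_of_ne (by omega), Function.update_of_ne (by omega)])]
  apply rearr
  · exact ((cascade_commute B (m + 2) j m θ α
      (fun k hk _ => hcomm m k (by simp [Nat.dist]; omega) _ _)).symm).eq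
  · exact htu
  · exact ((cascade_commute B i (m - 1) (m + 1) θ a
      (fun k hk hk2 => hcomm (m + 1) k (by simp [Nat.dist]; omega) _ _)).eq).symm

/-- Partial triangle: the product `C_{low+t-1,n} * ⋯ * C_{low,n}`. -/
def trih (n low t : ℕ) (θ : ℕ → ℕ → Θ) : M :=
  ((List.range t).map (fun k => cascade B (low + t - 1 - k) n (θ k))).prod

lemma trih_succ (n low t : ℕ) (θ : ℕ → ℕ → Θ) :
    trih B n low (t + 1) θ = trih B n (low + 1) t θ * cascade B low n (θ t) := by
  unfold trih
  rw [List.range_succ, List.map_append, List.prod_append]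
  simp only [List.map_cons, List.map_nil, List.prod_cons, List.prod_nil, mul_one]
  congr 1
  · refine congrArg List.prod (List.map_congr_left ?_)
    intro k hk
    congr 1
    omega
  · congr 1
    omega

lemma trih_congr (n low t : ℕ) (θ θ₂ : ℕ → ℕ → Θ) (h : ∀ k, k < t → θ k = θ₂ k) :
    trih B n low t θ = trih B n low t θ₂ := by
  unfold trih
  refine congrArg List.prod (List.map_congr_left ?_)
  intro k hk
  rw [List.mem_range] at hk
  rw [h k hk]

lemma trih_push
    (hfusion : ∀ (i : ℕ) (α β : Θ), ∃ a : Θ, B i α * B i β = B i a)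
    (hcomm : ∀ (i j : ℕ), 1 < Nat.dist i j → ∀ (α β : Θ),
      B i α * B j β = B j β * B i α)
    (hturnover : ∀ (i : ℕ) (α β γ : Θ), ∃ a b c : Θ,
      B i α * B (i + 1) β * B i γ = B (i + 1) a * B i b * B (i + 1) c)
    (n : ℕ) : ∀ t low m, 1 ≤ low → low ≤ m → m ≤ n → n - m < t →
    ∀ (θ : ℕ → ℕ → Θ) (α : Θ), ∃ θ' : ℕ → ℕ → Θ,
      trih B n low t θ * B m α = trih B n low t θ' := by
  intro t
  induction t with
  | zero => intro low m _ _ _ h4; omega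
  | succ t ih =>
    intro low m h1 h2 h3 h4 θ α
    by_cases hm : m = n
    · subst hm
      obtain ⟨ψ, hψ⟩ := cascade_merge B hfusion low m (by omega) (by omega) (θ t) α
      refine ⟨Function.update θ t ψ, ?_⟩
      rw [trih_succ, trih_succ, mul_assoc, hψ, Function.update_self,
        trih_congr B m (low + 1) t (Function.update θ t ψ) θ
          (fun k hk => Function.update_of_ne (by omega) _ _)]
    · have hmn : m < n := by omega
      obtain ⟨β, ψ, hpush⟩ := cascade_push B hcomm hturnover low m n h1 h2 hmn (θ t) α
      obtain ⟨θ'', h5⟩ := ih (low + 1) (m + 1) (by omega) (by omega) (by omega) (by omega) θ β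
      refine ⟨Function.update θ'' t ψ, ?_⟩
      calc trih B n low (t + 1) θ * B m α
          = trih B n (low + 1) t θ * (cascade B low n (θ t) * B m α) := by
            rw [trih_succ, mul_assoc]
        _ = trih B n (low + 1) t θ * B (m + 1) β * cascade B low n ψ := by
            rw [hpush, ← mul_assoc]
        _ = trih B n (low + 1) t θ'' * cascade B low n ψ := by rw [h5]
        _ = trih B n low (t + 1) (Function.update θ'' t ψ) := by
            rw [trih_succ, Function.update_self,
              trih_congr B n (low + 1) t (Function.update θ'' t ψ) θ''
                (fun k hk => Function.update_of_ne (by omega) _ _)]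

end helpers

lemma triangle_eq_trih {M Θ : Type*} [Monoid M] (B : ℕ → Θ → M) (n : ℕ) (θ : ℕ → ℕ → Θ) :
    triangle B n θ = trih B n 1 n θ := by
  unfold triangle trih
  refine congrArg List.prod (List.map_congr_left ?_)
  intro k hk
  rw [List.mem_range] at hk
  congr 1
  omega

/-- **Theorem (block into triangle).**  Let `B` be a family of blocks in a monoid `M`
(satisfying fusion, commutation and turnover) and `1 ≤ m ≤ n`.  A single block `B m α`
can be fully merged into a triangle of height `n`. -/
theorem block_merges_into_triangle {M Θ : Type*} [Monoid M] (B : ℕ → Θ → M)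
    (hfusion : ∀ (i : ℕ) (α β : Θ), ∃ a : Θ, B i α * B i β = B i a)
    (hcomm : ∀ (i j : ℕ), 1 < Nat.dist i j → ∀ (α β : Θ),
      B i α * B j β = B j β * B i α)
    (hturnover : ∀ (i : ℕ) (α β γ : Θ), ∃ a b c : Θ,
      B i α * B (i + 1) β * B i γ = B (i + 1) a * B i b * B (i + 1) c)
    (m n : ℕ) (hm : 1 ≤ m) (hmn : m ≤ n) :
    ∀ (θ : ℕ → ℕ → Θ) (α : Θ), ∃ θ' : ℕ → ℕ → Θ,
      triangle B n θ * B m α = triangle B n θ' := by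
  intro θ α
  obtain ⟨θ', hθ'⟩ := trih_push B hfusion hcomm hturnover n n 1 m (by omega) hm hmn
    (by omega) θ α
  exact ⟨θ', by rw [triangle_eq_trih, triangle_eq_trih, hθ']⟩
end

section
/- Let n ≥ 2 and let a_1, …, a_{n−1} and b_1, …, b_{n−1} be real numbers. On the 2^n-dimensional complex matrix space, define H_evenX := Σ_{even i, 1 ≤ i ≤ n−1} a_i · X_i X_{i+1} + Σ_{odd i, 1 ≤ i ≤ n−1} b_i · Y_i Y_{i+1} and H_oddX := Σ_{odd i, 1 ≤ i ≤ n−1} a_i · X_i X_{i+1} + Σ_{even i, 1 ≤ i ≤ n−1} b_i · Y_i Y_{i+1}. Then [H_evenX, H_oddX] = 0; that is, the XY-model Hamiltonian H = Σ_{i=1}^{n−1} (a_i X_i X_{i+1} + b_i Y_i Y_{i+1}) splits into two mutually commuting Kitaev chains. -/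
open Matrix

/-- The Pauli matrix `X`. -/
def PauliX : Matrix (Fin 2) (Fin 2) ℂ := !![0, 1; 1, 0]

/-- The Pauli matrix `Y`. -/
def PauliY : Matrix (Fin 2) (Fin 2) ℂ := !![0, -Complex.I; Complex.I, 0]

/-- For an `n`-qubit system and 1-indexed site `i`, `twoSite n P Q i` is the `2^n × 2^n`
matrix `P_i Q_{i+1}`, i.e. the `n`-fold Kronecker product with `P` in the `i`-th tensor
factor, `Q` in the `(i+1)`-th tensor factor, and 2×2 identities in all other factors.
(The tensor factor with 0-based index `k` corresponds to the 1-indexed site `k + 1`.) -/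
def twoSite (n : ℕ) (P Q : Matrix (Fin 2) (Fin 2) ℂ) (i : ℕ) :
    Matrix (Fin n → Fin 2) (Fin n → Fin 2) ℂ :=
  Matrix.of fun x y => ∏ k : Fin n,
    if (k : ℕ) + 1 = i then P (x k) (y k)
    else if (k : ℕ) = i then Q (x k) (y k)
    else if x k = y k then 1 else 0


def tp (n : ℕ) (M : Fin n → Matrix (Fin 2) (Fin 2) ℂ) :
    Matrix (Fin n → Fin 2) (Fin n → Fin 2) ℂ :=
  Matrix.of fun x y => ∏ k : Fin n, M k (x k) (y k)

def loc (P Q : Matrix (Fin 2) (Fin 2) ℂ) (i : ℕ) {n : ℕ} (k : Fin n) :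
    Matrix (Fin 2) (Fin 2) ℂ :=
  if (k : ℕ) + 1 = i then P else if (k : ℕ) = i then Q else 1

lemma twoSite_eq_tp (n : ℕ) (P Q : Matrix (Fin 2) (Fin 2) ℂ) (i : ℕ) :
    twoSite n P Q i = tp n (fun k => loc P Q i k) := by
  ext x y
  simp only [twoSite, tp, Matrix.of_apply]
  refine Finset.prod_congr rfl fun k _ => ?_
  simp only [loc]
  split_ifs <;> simp_all [Matrix.one_apply]

lemma tp_mul (n : ℕ) (M N : Fin n → Matrix (Fin 2) (Fin 2) ℂ) :
    tp n M * tp n N = tp n (fun k => M k * N k) := by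
  ext x z
  rw [Matrix.mul_apply]
  simp only [tp, Matrix.of_apply, Matrix.mul_apply]
  rw [Finset.prod_univ_sum, Fintype.piFinset_univ]
  exact Finset.sum_congr rfl fun y _ => (Finset.prod_mul_distrib).symm

lemma tp_smul (n : ℕ) (c : Fin n → ℂ) (M : Fin n → Matrix (Fin 2) (Fin 2) ℂ) :
    tp n (fun k => c k • M k) = (∏ k, c k) • tp n M := by
  ext x y
  simp [tp, Finset.prod_mul_distrib]

lemma tp_comm (n : ℕ) (M N : Fin n → Matrix (Fin 2) (Fin 2) ℂ) (ε : Fin n → ℂ)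
    (h : ∀ k, M k * N k = ε k • (N k * M k)) (hε : ∏ k, ε k = 1) :
    Commute (tp n M) (tp n N) := by
  unfold Commute SemiconjBy
  rw [tp_mul, tp_mul]
  calc tp n (fun k => M k * N k) = tp n (fun k => ε k • (N k * M k)) :=
        congrArg (tp n) (funext h)
    _ = (∏ k, ε k) • tp n (fun k => N k * M k) := tp_smul n ε _
    _ = tp n (fun k => N k * M k) := by rw [hε, one_smul]

lemma hXY : PauliX * PauliY = (-1 : ℂ) • (PauliY * PauliX) := by
  ext i j
  fin_cases i <;> fin_cases j <;>
    simp [PauliX, PauliY, Matrix.mul_apply, Fin.sum_univ_two]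

lemma comm_same (n : ℕ) (P : Matrix (Fin 2) (Fin 2) ℂ) (i j : ℕ) :
    Commute (twoSite n P P i) (twoSite n P P j) := by
  rw [twoSite_eq_tp, twoSite_eq_tp]
  refine tp_comm n _ _ (fun _ => 1) (fun k => ?_) (by simp)
  simp only [loc, one_smul]
  split_ifs <;> simp

lemma comm_disjoint (n : ℕ) (P Q : Matrix (Fin 2) (Fin 2) ℂ) (i j : ℕ)
    (hij : i ≠ j) (h1 : i ≠ j + 1) (h2 : j ≠ i + 1) :
    Commute (twoSite n P P i) (twoSite n Q Q j) := by
  rw [twoSite_eq_tp, twoSite_eq_tp]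
  refine tp_comm n _ _ (fun _ => 1) (fun k => ?_) (by simp)
  simp only [loc, one_smul]
  split_ifs <;> first | simp | omega

lemma comm_eq (n : ℕ) (i : ℕ) (h1 : 1 ≤ i) (h2 : i < n) :
    Commute (twoSite n PauliX PauliX i) (twoSite n PauliY PauliY i) := by
  rw [twoSite_eq_tp, twoSite_eq_tp]
  refine tp_comm n _ _
    (fun k => (if (k : ℕ) + 1 = i then (-1 : ℂ) else 1) *
      (if (k : ℕ) = i then (-1 : ℂ) else 1)) (fun k => ?_) ?_
  · simp only [loc]
    split_ifs <;> first | (exfalso; omega) | simp [hXY]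
  · rw [Finset.prod_mul_distrib]
    have e1 : (∏ k : Fin n, if (k : ℕ) + 1 = i then (-1 : ℂ) else 1) = -1 := by
      have : ∀ k : Fin n, ((k : ℕ) + 1 = i) ↔ (k = (⟨i - 1, by omega⟩ : Fin n)) := by
        intro k
        simp only [Fin.ext_iff]
        omega
      simp only [this]
      rw [Finset.prod_ite_eq' Finset.univ _ (fun _ => (-1 : ℂ))]
      simp
    have e2 : (∏ k : Fin n, if (k : ℕ) = i then (-1 : ℂ) else 1) = -1 := by
      have : ∀ k : Fin n, ((k : ℕ) = i) ↔ (k = (⟨i, h2⟩ : Fin n)) := by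
        intro k
        simp only [Fin.ext_iff]
      simp only [this]
      rw [Finset.prod_ite_eq' Finset.univ _ (fun _ => (-1 : ℂ))]
      simp
    rw [e1, e2]; ring

/-- **The XY model splits into two commuting Kitaev chains.**
For `n ≥ 2` and real couplings `a_i`, `b_i`, the two Hamiltonians
`H_evenX = Σ_{even i} a_i X_i X_{i+1} + Σ_{odd i} b_i Y_i Y_{i+1}` and
`H_oddX  = Σ_{odd i} a_i X_i X_{i+1} + Σ_{even i} b_i Y_i Y_{i+1}`
(sums over `1 ≤ i ≤ n−1`) commute: `[H_evenX, H_oddX] = 0`. -/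
theorem xy_model_commuting_kitaev_chains (n : ℕ) (hn : 2 ≤ n) (a b : ℕ → ℝ) :
    let HevenX : Matrix (Fin n → Fin 2) (Fin n → Fin 2) ℂ :=
      ∑ i ∈ (Finset.Icc 1 (n - 1)).filter (fun i => Even i),
        (a i : ℂ) • twoSite n PauliX PauliX i +
      ∑ i ∈ (Finset.Icc 1 (n - 1)).filter (fun i => Odd i),
        (b i : ℂ) • twoSite n PauliY PauliY i
    let HoddX : Matrix (Fin n → Fin 2) (Fin n → Fin 2) ℂ :=
      ∑ i ∈ (Finset.Icc 1 (n - 1)).filter (fun i => Odd i),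
        (a i : ℂ) • twoSite n PauliX PauliX i +
      ∑ i ∈ (Finset.Icc 1 (n - 1)).filter (fun i => Even i),
        (b i : ℂ) • twoSite n PauliY PauliY i
    HevenX * HoddX - HoddX * HevenX = 0 := by
  intro HevenX HoddX
  have key : ∀ (i j : ℕ), 1 ≤ i → i ≤ n - 1 → 1 ≤ j → j ≤ n - 1 →
      (Even i ∧ Even j ∨ Odd i ∧ Odd j) →
      Commute (twoSite n PauliX PauliX i) (twoSite n PauliY PauliY j) := by
    intro i j hi1 hi2 hj1 hj2 hpar
    by_cases hij : i = j
    · subst hij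
      exact comm_eq n i hi1 (by omega)
    · refine comm_disjoint n _ _ i j hij ?_ ?_ <;>
      · rcases hpar with ⟨⟨p, hp⟩, ⟨q, hq⟩⟩ | ⟨⟨p, hp⟩, ⟨q, hq⟩⟩ <;> omega
  have hc : Commute HevenX HoddX := by
    refine Commute.add_left (Commute.add_right ?_ ?_) (Commute.add_right ?_ ?_) <;>
      refine Commute.sum_left _ _ _ fun i hi => ?_ <;>
      refine Commute.sum_right _ _ _ fun j hj => ?_ <;>
      simp only [Finset.mem_filter, Finset.mem_Icc] at hi hj <;>
      refine Commute.smul_left (Commute.smul_right ?_ _) _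
    · exact comm_same n PauliX i j
    · exact key i j hi.1.1 hi.1.2 hj.1.1 hj.1.2 (Or.inl ⟨hi.2, hj.2⟩)
    · exact (key j i hj.1.1 hj.1.2 hi.1.1 hi.1.2 (Or.inr ⟨hj.2, hi.2⟩)).symm
    · exact comm_same n PauliY i j
  exact sub_eq_zero_of_eq hc
end
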